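/- Let Q_D be the unique (up to isometry) complete ultrametric space satisfying Q_D ≅ {ε} + (A × ½·Q_D) for a set A of actions with the discrete metric (i.e., Q_D is the space of finite and infinite sequences over A with the Baire-type metric d(q,q') = 2^{-n} where n is the length of the longest common prefix). Fix n̄ ∈ ℕ and τ ∈ A, and let P_D be the space of nonempty compact subsets of Q_D with the Hausdorff metric. For 0 ≤ i ≤ n̄ define p₁ ⊕ᵢ p₂ = let p̄ = { q ∈ p₁ ∪ p₂ : q = τ^{n̄−i}·q̄ for some q̄ ≠ ε } in (if p̄ = ∅ then {τ^{n̄−i}} else p̄). Then each ⊕ᵢ is a well-defined nonexpansive operator on P_D × P_D, and is associative and commutative. -/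

import Mathlib

open Filter Topology EMetric
open scoped Classical

/-- `Q_D` is (characterized abstractly as) the complete space of finite and infinite
sequences over `A` with the Baire metric: there is an empty sequence `eps`, a prefixing
operation `cons`, every element is either `eps` or a `cons`, `cons` is injective, and the
metric satisfies `d(b·q, b·q') = d(q,q')/2`, `d(b·q, b'·q') = 1` for `b ≠ b'`, and
`d(ε, b·q) = 1`.  Fixing `τ ∈ A`, `i ≤ n̄`, the operator
`p₁ ⊕ᵢ p₂ = let p̄ = {q ∈ p₁ ∪ p₂ | q = τ^{n̄-i}·q̄, q̄ ≠ ε} in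
  if p̄ = ∅ then {τ^{n̄-i}} else p̄`
is a well-defined (nonempty-compact-valued), nonexpansive, associative and commutative
operator on `P_D = 𝒫_nco(Q_D)` with the Hausdorff metric. -/
theorem stmt15 {A : Type*} (QD : Type*) [MetricSpace QD] [CompleteSpace QD]
    (eps : QD) (cons : A → QD → QD)
    (hcases : ∀ q : QD, q = eps ∨ ∃ b q', q = cons b q')
    (hinj : ∀ b b' q q', cons b q = cons b' q' → b = b' ∧ q = q')
    (hne : ∀ b q, cons b q ≠ eps)
    (hdist_cons : ∀ b q q', dist (cons b q) (cons b q') = dist q q' / 2)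
    (hdist_ne : ∀ b b' q q', b ≠ b' → dist (cons b q) (cons b' q') = 1)
    (hdist_eps : ∀ b q, dist eps (cons b q) = 1)
    (τ : A) (nbar i : ℕ) (hi : i ≤ nbar) :
    ∀ τpow : ℕ → QD → QD, (τpow = fun k q => (cons τ)^[k] q) →
    ∀ filt : Set QD → Set QD,
      (filt = fun p => {q ∈ p | ∃ qb, qb ≠ eps ∧ q = τpow (nbar - i) qb}) →
    ∀ op : Set QD → Set QD → Set QD,
      (op = fun p₁ p₂ =>
        if filt (p₁ ∪ p₂) = ∅ then {τpow (nbar - i) eps} else filt (p₁ ∪ p₂)) →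
    -- well-definedness: `⊕ᵢ` maps nonempty compact sets to nonempty compact sets
    ((∀ p₁ p₂ : Set QD, p₁.Nonempty → p₂.Nonempty → IsCompact p₁ → IsCompact p₂ →
        (op p₁ p₂).Nonempty ∧ IsCompact (op p₁ p₂)) ∧
    -- nonexpansiveness with respect to the Hausdorff metric (max metric on pairs)
    (∀ p₁ p₂ q₁ q₂ : Set QD, p₁.Nonempty → p₂.Nonempty → q₁.Nonempty → q₂.Nonempty →
        IsCompact p₁ → IsCompact p₂ → IsCompact q₁ → IsCompact q₂ →
        hausdorffEdist (op p₁ p₂) (op q₁ q₂) ≤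
          max (hausdorffEdist p₁ q₁) (hausdorffEdist p₂ q₂)) ∧
    -- associativity
    (∀ p₁ p₂ p₃ : Set QD, p₁.Nonempty → p₂.Nonempty → p₃.Nonempty →
        IsCompact p₁ → IsCompact p₂ → IsCompact p₃ →
        op (op p₁ p₂) p₃ = op p₁ (op p₂ p₃)) ∧
    -- commutativity
    (∀ p₁ p₂ : Set QD, p₁.Nonempty → p₂.Nonempty → IsCompact p₁ → IsCompact p₂ →
        op p₁ p₂ = op p₂ p₁)) := by
  intro τpow hτ filt hfilt op hop
  -- Basic metric facts
  have heps_le : ∀ q : QD, dist eps q ≤ 1 := by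
    intro q
    rcases hcases q with rfl | ⟨b, q', rfl⟩
    · simp
    · rw [hdist_eps]
  have hone : ∀ q q' : QD, dist q q' ≤ 1 := by
    intro q q'
    rcases hcases q with rfl | ⟨b, x, rfl⟩
    · exact heps_le q'
    · rcases hcases q' with rfl | ⟨b', y, rfl⟩
      · rw [dist_comm]; exact heps_le _
      · by_cases hb : b = b'
        · subst hb
          rw [hdist_cons]
          have h1 := heps_le x
          have h2 := heps_le y
          have h3 : dist x y ≤ dist x eps + dist eps y := dist_triangle _ _ _
          rw [dist_comm x eps] at h3
          linarith
        · rw [hdist_ne _ _ _ _ hb]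
  have hpow_le_one : ∀ k : ℕ, ((1:ℝ)/2)^k ≤ 1 := by
    intro k
    apply pow_le_one₀ <;> norm_num
  have hpowdist : ∀ (k : ℕ) (a b : QD),
      dist ((cons τ)^[k] a) ((cons τ)^[k] b) = (1/2 : ℝ)^k * dist a b := by
    intro k
    induction k with
    | zero => simp
    | succ k ih =>
      intro a b
      simp only [Function.iterate_succ_apply']
      rw [hdist_cons, ih, pow_succ]
      ring
  have hinj' : ∀ (k : ℕ) (a b : QD), (cons τ)^[k] a = (cons τ)^[k] b → a = b := by
    intro k
    induction k with
    | zero => intro a b h; exact h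
    | succ k ih =>
      intro a b h
      simp only [Function.iterate_succ_apply'] at h
      exact ih a b (hinj _ _ _ _ h).2
  have hnotT : ∀ (k : ℕ) (x a : QD), (∀ b, x ≠ (cons τ)^[k] b) →
      (1/2 : ℝ)^k ≤ dist x ((cons τ)^[k] a) := by
    intro k
    induction k with
    | zero => intro x a hx; exact absurd rfl (hx x)
    | succ k ih =>
      intro x a hx
      simp only [Function.iterate_succ_apply']
      rcases hcases x with rfl | ⟨b, x', rfl⟩
      · rw [hdist_eps]; exact hpow_le_one _
      · by_cases hb : b = τ
        · have hx' : ∀ b, x' ≠ (cons τ)^[k] b := by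
            intro b h
            apply hx b
            rw [hb, Function.iterate_succ_apply', h]
          rw [hb, hdist_cons, pow_succ]
          have := ih x' a hx'
          linarith
        · rw [hdist_ne _ _ _ _ hb]; exact hpow_le_one _
  set m : ℕ := nbar - i with hm
  set S : Set QD := {q | ∃ qb, qb ≠ eps ∧ q = (cons τ)^[m] qb} with hS
  set c : QD := (cons τ)^[m] eps with hc
  -- separation of S
  have hSsep : ∀ x ∉ S, ∀ s ∈ S, (1/2 : ℝ)^m ≤ dist x s := by
    intro x hx s hs
    obtain ⟨qb, hqb, rfl⟩ := hs
    by_cases hT : ∃ b, x = (cons τ)^[m] b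
    · obtain ⟨b, rfl⟩ := hT
      have hbe : b = eps := by
        by_contra hbe
        exact hx ⟨b, hbe, rfl⟩
      rw [hbe, hpowdist]
      have : dist eps qb = 1 := by
        rcases hcases qb with rfl | ⟨b', q', rfl⟩
        · exact absurd rfl hqb
        · exact hdist_eps _ _
      rw [this, mul_one]
    · push_neg at hT
      exact hnotT m x qb hT
  have hSclosed : IsClosed S := by
    rw [← isOpen_compl_iff, Metric.isOpen_iff]
    intro x hx
    refine ⟨(1/2)^m, by positivity, ?_⟩
    intro y hy hyS
    have h1 := hSsep x hx y hyS
    rw [Metric.mem_ball, dist_comm] at hy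
    linarith
  have hcS : c ∉ S := by
    rintro ⟨qb, hqb, h⟩
    exact hqb (hinj' m qb eps h.symm)
  -- normal form of filt and op
  have hfe : ∀ p : Set QD, filt p = p ∩ S := by
    intro p
    rw [hfilt, hτ]
    ext q
    simp only [Set.mem_setOf_eq, Set.mem_sep_iff, Set.mem_inter_iff, hS]
  have hoe : ∀ X Y : Set QD,
      op X Y = if (X ∩ S ∪ Y ∩ S) = ∅ then {c} else X ∩ S ∪ Y ∩ S := by
    intro X Y
    have hd : (X ∪ Y) ∩ S = X ∩ S ∪ Y ∩ S := Set.union_inter_distrib_right X Y S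
    rw [hop]
    simp only [hfe, hτ, hd, hc]
  have hiS : ∀ X Y : Set QD, (op X Y) ∩ S = X ∩ S ∪ Y ∩ S := by
    intro X Y
    rw [hoe]
    split_ifs with h
    · rw [Set.singleton_inter_eq_empty.2 hcS, h]
    · ext q
      simp only [Set.mem_inter_iff, Set.mem_union]
      tauto
  -- elements of op-sets are of the form τ^m · b
  have hopT : ∀ (X Y : Set QD) (u : QD), u ∈ op X Y → ∃ b, u = (cons τ)^[m] b := by
    intro X Y u hu
    rw [hoe] at hu
    split_ifs at hu with h
    · exact ⟨eps, by simpa using hu⟩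
    · rcases hu with hu | hu
      · obtain ⟨qb, _, hq⟩ := hu.2
        exact ⟨qb, hq⟩
      · obtain ⟨qb, _, hq⟩ := hu.2
        exact ⟨qb, hq⟩
  have hTdist : ∀ a b : QD,
      dist ((cons τ)^[m] a) ((cons τ)^[m] b) ≤ (1/2 : ℝ)^m := by
    intro a b
    rw [hpowdist]
    calc (1/2 : ℝ)^m * dist a b ≤ (1/2 : ℝ)^m * 1 := by
          apply mul_le_mul_of_nonneg_left (hone a b) (by positivity)
      _ = (1/2 : ℝ)^m := mul_one _
  -- well-definedness
  have hwd : ∀ p₁ p₂ : Set QD, p₁.Nonempty → p₂.Nonempty → IsCompact p₁ → IsCompact p₂ →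
      (op p₁ p₂).Nonempty ∧ IsCompact (op p₁ p₂) := by
    intro p₁ p₂ h1 h2 hc1 hc2
    rw [hoe]
    split_ifs with h
    · exact ⟨Set.singleton_nonempty c, isCompact_singleton⟩
    · constructor
      · exact Set.nonempty_iff_ne_empty.2 h
      · exact (hc1.inter_right hSclosed).union (hc2.inter_right hSclosed)
  refine ⟨hwd, ?_, ?_, ?_⟩
  · -- nonexpansiveness
    intro p₁ p₂ q₁ q₂ hp1n hp2n hq1n hq2n hp1c hp2c hq1c hq2c
    set r : ENNReal := max (hausdorffEdist p₁ q₁) (hausdorffEdist p₂ q₂) with hr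
    set em : ENNReal := ENNReal.ofReal ((1/2 : ℝ)^m) with hem
    have hUV : hausdorffEdist (p₁ ∪ p₂) (q₁ ∪ q₂) ≤ r := by
      apply hausdorffEdist_le_of_infEdist
      · rintro x (hx | hx)
        · exact le_trans (le_trans (infEdist_anti Set.subset_union_left)
            (infEdist_le_hausdorffEdist_of_mem hx)) (le_max_left _ _)
        · exact le_trans (le_trans (infEdist_anti Set.subset_union_right)
            (infEdist_le_hausdorffEdist_of_mem hx)) (le_max_right _ _)
      · rintro x (hx | hx)
        · exact le_trans (le_trans (infEdist_anti Set.subset_union_left)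
            (infEdist_le_hausdorffEdist_of_mem hx))
            (le_trans (le_of_eq (hausdorffEdist_comm)) (le_max_left _ _))
        · exact le_trans (le_trans (infEdist_anti Set.subset_union_right)
            (infEdist_le_hausdorffEdist_of_mem hx))
            (le_trans (le_of_eq (hausdorffEdist_comm)) (le_max_right _ _))
    rcases le_or_gt em r with hcase | hcase
    · -- coarse bound: everything lives in a set of diameter (1/2)^m
      refine le_trans ?_ hcase
      obtain ⟨⟨v, hv⟩, -⟩ := hwd q₁ q₂ hq1n hq2n hq1c hq2c
      obtain ⟨⟨u, hu⟩, -⟩ := hwd p₁ p₂ hp1n hp2n hp1c hp2c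
      apply hausdorffEdist_le_of_mem_edist
      · intro x hx
        refine ⟨v, hv, ?_⟩
        obtain ⟨a, rfl⟩ := hopT _ _ _ hx
        obtain ⟨b, rfl⟩ := hopT _ _ _ hv
        rw [edist_dist]
        exact ENNReal.ofReal_le_ofReal (hTdist a b)
      · intro x hx
        refine ⟨u, hu, ?_⟩
        obtain ⟨a, rfl⟩ := hopT _ _ _ hx
        obtain ⟨b, rfl⟩ := hopT _ _ _ hu
        rw [edist_dist]
        exact ENNReal.ofReal_le_ofReal (hTdist a b)
    · -- fine case: the filtered parts correspond
      have dir : ∀ (X₁ X₂ Y₁ Y₂ : Set QD), Y₁.Nonempty → IsCompact Y₁ → IsCompact Y₂ →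
          hausdorffEdist (X₁ ∪ X₂) (Y₁ ∪ Y₂) ≤ r →
          ∀ u ∈ (X₁ ∪ X₂) ∩ S, ∃ v ∈ (Y₁ ∪ Y₂) ∩ S, edist u v ≤ r := by
        intro X₁ X₂ Y₁ Y₂ hY1n hY1c hY2c hXY u hu
        have hVc : IsCompact (Y₁ ∪ Y₂) := hY1c.union hY2c
        have hVn : (Y₁ ∪ Y₂).Nonempty := hY1n.mono Set.subset_union_left
        obtain ⟨v, hvV, hvd⟩ := hVc.exists_infEdist_eq_edist hVn u
        have h1 : edist u v ≤ r := by
          rw [← hvd]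
          exact le_trans (infEdist_le_hausdorffEdist_of_mem hu.1) hXY
        have hlt : dist u v < (1/2 : ℝ)^m := by
          have h2 : edist u v < em := lt_of_le_of_lt h1 hcase
          rw [edist_dist, hem] at h2
          exact (ENNReal.ofReal_lt_ofReal_iff (by positivity)).1 h2
        have hvS : v ∈ S := by
          by_contra hvS
          have := hSsep v hvS u hu.2
          rw [dist_comm] at this
          linarith
        exact ⟨v, ⟨hvV, hvS⟩, h1⟩
      have hVU : hausdorffEdist (q₁ ∪ q₂) (p₁ ∪ p₂) ≤ r := by
        exact le_trans (le_of_eq (hausdorffEdist_comm)) hUV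
      have dir1 := dir p₁ p₂ q₁ q₂ hq1n hq1c hq2c hUV
      have dir2 := dir q₁ q₂ p₁ p₂ hp1n hp1c hp2c hVU
      have hdP : (p₁ ∪ p₂) ∩ S = p₁ ∩ S ∪ p₂ ∩ S := Set.union_inter_distrib_right _ _ _
      have hdQ : (q₁ ∪ q₂) ∩ S = q₁ ∩ S ∪ q₂ ∩ S := Set.union_inter_distrib_right _ _ _
      by_cases hP : (p₁ ∪ p₂) ∩ S = ∅
      · have hQ : (q₁ ∪ q₂) ∩ S = ∅ := by
          by_contra hQ
          obtain ⟨u, hu⟩ := Set.nonempty_iff_ne_empty.2 hQ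
          obtain ⟨v, hv, -⟩ := dir2 u hu
          rw [hP] at hv
          exact hv
        rw [hoe, hoe, ← hdP, ← hdQ, if_pos hP, if_pos hQ]
        exact le_trans (le_of_eq hausdorffEdist_self) (zero_le (a := r))
      · have hQ : (q₁ ∪ q₂) ∩ S ≠ ∅ := by
          intro hQ
          obtain ⟨u, hu⟩ := Set.nonempty_iff_ne_empty.2 hP
          obtain ⟨v, hv, -⟩ := dir1 u hu
          rw [hQ] at hv
          exact hv
        rw [hoe, hoe, ← hdP, ← hdQ, if_neg hP, if_neg hQ]
        exact hausdorffEdist_le_of_mem_edist dir1 dir2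
  · -- associativity
    intro p₁ p₂ p₃ _ _ _ _ _ _
    rw [hoe (op p₁ p₂) p₃, hiS p₁ p₂, hoe p₁ (op p₂ p₃), hiS p₂ p₃, Set.union_assoc]
  · -- commutativity
    intro p₁ p₂ _ _ _ _
    rw [hoe p₁ p₂, hoe p₂ p₁, Set.union_comm (p₁ ∩ S)]
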